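/- Let blocks 1,…,N_full be distributed among S subnets as follows: first each subnet receives the |C| common blocks, then the remaining N_full − |C| blocks are assigned round-robin (block i goes to subnet i mod S), and finally each subnet with fewer than N_sub blocks is topped up with distinct blocks it does not already contain. If (N_full + (S−1)|C|)/S ≤ N_sub ≤ N_full, then every block is contained in at least one subnet and every subnet contains exactly N_sub distinct blocks. -/

import Mathlib

/-- The round-robin core assignment: subnet `s` receives all common blocks `C`,
plus every non-common block whose index `i` (in the sorted enumeration of the
non-common blocks) satisfies `i % S = s`. -/
def roundRobinCore (S Nfull : ℕ) (C : Finset (Fin Nfull)) (s : Fin S) :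
    Finset (Fin Nfull) :=
  C ∪ (Finset.univ \ C).filter
    (fun b => (((Finset.univ \ C).sort (· ≤ ·)).idxOf b) % S = s.val)

theorem core_card_le
    (S Nfull Nsub : ℕ) (hS : 0 < S)
    (C : Finset (Fin Nfull))
    (hkey : Nfull + (S - 1) * C.card ≤ S * Nsub)
    (s : Fin S) : (roundRobinCore S Nfull C s).card ≤ Nsub := by
  classical
  obtain ⟨S', rfl⟩ : ∃ S', S = S' + 1 := ⟨S - 1, by omega⟩
  set L := ((Finset.univ : Finset (Fin Nfull)) \ C).sort (· ≤ ·) with hL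
  set m := Nfull - C.card with hm
  have hCle : C.card ≤ Nfull := by simpa using Finset.card_le_univ C
  have hlen : L.length = m := by
    rw [hL, Finset.length_sort, Finset.card_sdiff_of_subset (Finset.subset_univ C)]
    simp [hm]
  have hdisj : Disjoint C (((Finset.univ : Finset (Fin Nfull)) \ C).filter
      (fun b => (L.idxOf b) % (S' + 1) = s.val)) := by
    rw [Finset.disjoint_left]
    intro a ha hmem
    exact (Finset.mem_sdiff.1 (Finset.mem_filter.1 hmem).1).2 ha
  rw [roundRobinCore, Finset.card_union_of_disjoint hdisj]
  set cf := (((Finset.univ : Finset (Fin Nfull)) \ C).filter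
      (fun b => (L.idxOf b) % (S' + 1) = s.val)).card with hcf
  -- step 1: cf ≤ card of filtered range
  have step1 : cf ≤ ((Finset.range m).filter (fun i => i % (S' + 1) = s.val)).card := by
    apply Finset.card_le_card_of_injOn (fun b => L.idxOf b)
    · intro b hb
      rw [Finset.mem_coe, Finset.mem_filter] at hb ⊢
      have hbL : b ∈ L := (Finset.mem_sort _).2 hb.1
      refine ⟨Finset.mem_range.2 ?_, hb.2⟩
      rw [← hlen]
      exact List.idxOf_lt_length_iff.2 hbL
    · intro a ha b hb hab
      have haL : a ∈ L := (Finset.mem_sort _).2 (Finset.mem_filter.1 ha).1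
      have hbL : b ∈ L := (Finset.mem_sort _).2 (Finset.mem_filter.1 hb).1
      exact (List.idxOf_inj haL).1 hab
  -- step 2: bound the filtered range
  have step2 : (S' + 1) * ((Finset.range m).filter (fun i => i % (S' + 1) = s.val)).card
      ≤ m + S' := by
    rcases Nat.eq_zero_or_pos m with hm0 | hm0
    · simp [hm0]
    · have hcard : ((Finset.range m).filter (fun i => i % (S' + 1) = s.val)).card
          ≤ (m - 1) / (S' + 1) + 1 := by
        have := Finset.card_le_card_of_injOn (fun i => i / (S' + 1))
          (s := (Finset.range m).filter (fun i => i % (S' + 1) = s.val))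
          (t := Finset.range ((m - 1) / (S' + 1) + 1))
          (by
            intro i hi
            rw [Finset.mem_coe, Finset.mem_filter, Finset.mem_range] at hi
            show i / (S' + 1) ∈ Finset.range ((m - 1) / (S' + 1) + 1)
            rw [Finset.mem_range]
            have h1 : i ≤ m - 1 := by omega
            have h2 := Nat.div_le_div_right (c := S' + 1) h1
            omega)
          (by
            intro i hi j hj hij
            simp only [Finset.mem_coe, Finset.mem_filter] at hi hj
            have hij' : i / (S' + 1) = j / (S' + 1) := by simpa using hij
            have e1 : i = (S' + 1) * (i / (S' + 1)) + i % (S' + 1) :=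
              (Nat.div_add_mod i (S' + 1)).symm
            have e2 : j = (S' + 1) * (j / (S' + 1)) + j % (S' + 1) :=
              (Nat.div_add_mod j (S' + 1)).symm
            rw [e1, e2, hij', hi.2, hj.2])
        simpa using this
      have h1 : (S' + 1) * ((Finset.range m).filter (fun i => i % (S' + 1) = s.val)).card
          ≤ (S' + 1) * ((m - 1) / (S' + 1) + 1) := Nat.mul_le_mul_left _ hcard
      have h2 : (S' + 1) * ((m - 1) / (S' + 1)) ≤ m - 1 := by
        rw [mul_comm]; exact Nat.div_mul_le_self _ _
      calc (S' + 1) * ((Finset.range m).filter (fun i => i % (S' + 1) = s.val)).card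
          ≤ (S' + 1) * ((m - 1) / (S' + 1) + 1) := h1
        _ = (S' + 1) * ((m - 1) / (S' + 1)) + (S' + 1) := by ring
        _ ≤ (m - 1) + (S' + 1) := by omega
        _ ≤ m + S' := by omega
  have step3 : (S' + 1) * cf ≤ m + S' :=
    le_trans (Nat.mul_le_mul_left _ step1) step2
  -- combine
  have hmul : (S' + 1) * (C.card + cf) < (S' + 1) * (Nsub + 1) := by
    have e1 : (S' + 1) * (C.card + cf) = (S' + 1) * C.card + (S' + 1) * cf := by ring
    have e2 : (S' + 1) * C.card = S' * C.card + C.card := by ring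
    have hk : Nfull + S' * C.card ≤ (S' + 1) * Nsub := by simpa using hkey
    have e3 : (S' + 1) * (Nsub + 1) = (S' + 1) * Nsub + (S' + 1) := by ring
    generalize hX : S' * C.card = X at *
    generalize hY : (S' + 1) * cf = Y at *
    generalize hZ : (S' + 1) * Nsub = Z at *
    omega
  have := Nat.lt_of_mul_lt_mul_left hmul
  omega

/-- Distributing blocks `1,…,N_full` among `S` subnets by first giving
each subnet the common blocks `C`, then assigning the remaining blocks round-robin
(block `i` to subnet `i mod S`), and finally topping each subnet up with distinct
blocks it does not yet contain, succeeds whenever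
`(N_full + (S−1)|C|)/S ≤ N_sub ≤ N_full`: every block lies in some subnet and every
subnet has exactly `N_sub` distinct blocks. -/
theorem roundRobin_assignment_valid
    (S Nfull Nsub : ℕ) (hS : 0 < S)
    (C : Finset (Fin Nfull))
    (hlow : ((Nfull : ℝ) + (S - 1) * C.card) / S ≤ Nsub)
    (hhigh : Nsub ≤ Nfull) :
    ∃ subnets : Fin S → Finset (Fin Nfull),
      (∀ s, roundRobinCore S Nfull C s ⊆ subnets s) ∧
      (∀ s, (subnets s).card = Nsub) ∧
      (∀ b : Fin Nfull, ∃ s, b ∈ subnets s) := by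
  classical
  have hkey : Nfull + (S - 1) * C.card ≤ S * Nsub := by
    have hS' : (0:ℝ) < S := by exact_mod_cast hS
    rw [div_le_iff₀ hS'] at hlow
    have h1 : ((S:ℝ) - 1) = ((S - 1 : ℕ) : ℝ) := by
      rw [Nat.cast_sub hS]; simp
    rw [h1] at hlow
    have : (Nfull : ℝ) + ((S - 1 : ℕ) : ℝ) * C.card ≤ (S : ℝ) * Nsub := by linarith
    exact_mod_cast this
  have hcore := core_card_le S Nfull Nsub hS C hkey
  have hsup : ∀ s : Fin S, ∃ u, roundRobinCore S Nfull C s ⊆ u ∧ u.card = Nsub := by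
    intro s
    obtain ⟨u, h1, _, h3⟩ := Finset.exists_subsuperset_card_eq
      (Finset.subset_univ (roundRobinCore S Nfull C s)) (hcore s)
      (by simpa using hhigh)
    exact ⟨u, h1, h3⟩
  choose subnets hsub hcard using hsup
  refine ⟨subnets, hsub, hcard, ?_⟩
  intro b
  by_cases hb : b ∈ C
  · exact ⟨⟨0, hS⟩, hsub _ (Finset.mem_union_left _ hb)⟩
  · set L := ((Finset.univ : Finset (Fin Nfull)) \ C).sort (· ≤ ·) with hL
    refine ⟨⟨(L.idxOf b) % S, Nat.mod_lt _ hS⟩, hsub _ ?_⟩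
    apply Finset.mem_union_right
    rw [Finset.mem_filter]
    exact ⟨by simp [hb], rfl⟩
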